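/- Let $s$ be a bipartite forest on white vertices $\{1,\ldots,m\}$ and black vertices $\{1,\ldots,n\}$ with edge weights $\ell=(\ell_1,\ldots,\ell_{|s|})$, all positive. Let $x_i(s,\ell)$ (resp. $y_i(s,\ell)$) be the sum of weights of edges incident to the $i$-th white (resp. black) vertex. Given compositions $\mathbf{x}$, $\mathbf{y}$ with $x_i = x_i(s,\ell)$ and $y_i = y_i(s,\ell)$ for all $i$, the weight of the $j$-th edge is determined by $\ell_j = \sum_{i \in W(s^\circ_j)} x_i - \sum_{i \in B(s^\circ_j)} y_i$, where $s^\circ_j$ is the connected component of the white endpoint of edge $j$ in the forest $s$ with edge $j$ removed. -/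
import Mathlib


open Sum

/-- Adjacency relation on `Fin m ⊕ Fin n` induced by the bipartite edge list `E`,
using only edges with index different from `j`. -/
def bipAdjWithout {m n K : ℕ} (E : Fin K → Fin m × Fin n) (j : Fin K)
    (a b : Fin m ⊕ Fin n) : Prop :=
  ∃ k : Fin K, k ≠ j ∧
    ((a = inl (E k).1 ∧ b = inr (E k).2) ∨ (b = inl (E k).1 ∧ a = inr (E k).2))

open scoped Classical in
/-- In a bipartite forest with positive edge weights `ℓ`, if the type
`(x, y)` is given by the weight-sums at the white and black vertices, then the weight of
the `j`-th edge is recovered as `ℓ j = ∑_{i ∈ W(s°_j)} x i - ∑_{i ∈ B(s°_j)} y i`, where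
`s°_j` is the connected component of the white endpoint of edge `j` after removing edge
`j`. -/
theorem edge_weight_determined (m n K : ℕ) (E : Fin K → Fin m × Fin n) (ℓ : Fin K → ℕ)
    (hpos : ∀ k, 0 < ℓ k) (hinj : Function.Injective E)
    (hforest : ∀ j : Fin K,
      ¬ Relation.ReflTransGen (bipAdjWithout E j) (inl (E j).1) (inr (E j).2))
    (x : Fin m → ℕ) (y : Fin n → ℕ)
    (hx : ∀ i, x i = ∑ k ∈ Finset.univ.filter (fun k : Fin K => (E k).1 = i), ℓ k)
    (hy : ∀ i, y i = ∑ k ∈ Finset.univ.filter (fun k : Fin K => (E k).2 = i), ℓ k)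
    (j : Fin K) :
    (ℓ j : ℤ)
      = (∑ i : Fin m,
          if Relation.ReflTransGen (bipAdjWithout E j) (inl (E j).1) (inl i)
          then (x i : ℤ) else 0)
      - ∑ i : Fin n,
          if Relation.ReflTransGen (bipAdjWithout E j) (inl (E j).1) (inr i)
          then (y i : ℤ) else 0 := by
  classical
  set R : (Fin m ⊕ Fin n) → Prop :=
    Relation.ReflTransGen (bipAdjWithout E j) (inl (E j).1) with hR
  have hW : (∑ i : Fin m, if R (inl i) then (x i : ℤ) else 0)
      = ∑ k : Fin K, if R (inl (E k).1) then (ℓ k : ℤ) else 0 := by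
    rw [← Finset.sum_fiberwise (Finset.univ) (fun k : Fin K => (E k).1)
      (fun k => if R (inl (E k).1) then (ℓ k : ℤ) else 0)]
    refine Finset.sum_congr rfl fun i _ => ?_
    split_ifs with h
    · rw [hx i]
      push_cast
      refine Finset.sum_congr rfl fun k hk => ?_
      simp only [Finset.mem_filter] at hk
      rw [if_pos (by rw [hk.2]; exact h)]
    · symm
      refine Finset.sum_eq_zero fun k hk => ?_
      simp only [Finset.mem_filter] at hk
      rw [if_neg (by rw [hk.2]; exact h)]
  have hB : (∑ i : Fin n, if R (inr i) then (y i : ℤ) else 0)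
      = ∑ k : Fin K, if R (inr (E k).2) then (ℓ k : ℤ) else 0 := by
    rw [← Finset.sum_fiberwise (Finset.univ) (fun k : Fin K => (E k).2)
      (fun k => if R (inr (E k).2) then (ℓ k : ℤ) else 0)]
    refine Finset.sum_congr rfl fun i _ => ?_
    split_ifs with h
    · rw [hy i]
      push_cast
      refine Finset.sum_congr rfl fun k hk => ?_
      simp only [Finset.mem_filter] at hk
      rw [if_pos (by rw [hk.2]; exact h)]
    · symm
      refine Finset.sum_eq_zero fun k hk => ?_
      simp only [Finset.mem_filter] at hk
      rw [if_neg (by rw [hk.2]; exact h)]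
  rw [hW, hB, ← Finset.sum_sub_distrib]
  have hterm : ∀ k : Fin K,
      ((if R (inl (E k).1) then (ℓ k : ℤ) else 0)
        - (if R (inr (E k).2) then (ℓ k : ℤ) else 0))
      = if k = j then (ℓ j : ℤ) else 0 := by
    intro k
    by_cases hkj : k = j
    · subst hkj
      rw [if_pos Relation.ReflTransGen.refl, if_neg (hforest k), if_pos rfl]
      ring
    · have hiff : R (inl (E k).1) ↔ R (inr (E k).2) := by
        constructor
        · intro h
          exact h.tail ⟨k, hkj, Or.inl ⟨rfl, rfl⟩⟩
        · intro h
          exact h.tail ⟨k, hkj, Or.inr ⟨rfl, rfl⟩⟩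
      rw [if_neg hkj]
      by_cases h : R (inl (E k).1)
      · rw [if_pos h, if_pos (hiff.mp h)]; ring
      · rw [if_neg h, if_neg (fun h' => h (hiff.mpr h'))]; ring
  rw [Finset.sum_congr rfl (fun k _ => hterm k), Finset.sum_ite_eq' Finset.univ j]
  simp
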